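/- Let h : ℝ^p × ℝ^m → ℝ be twice continuously differentiable and let ṽ : ℝ^p → ℝ^m be differentiable with ∇_v h(ψ, ṽ(ψ)) = 0 for all ψ. For ψ ∈ ℝ^p define the negative-Hessian blocks at (ψ, ṽ(ψ)): I_ψψ(ψ) = -∂²h/∂ψ∂ψᵀ, I_ψv(ψ) = -∂²h/∂ψ∂vᵀ, I_vψ(ψ) = I_ψv(ψ)ᵀ, I_vv(ψ) = -∂²h/∂v∂vᵀ, all evaluated at (ψ, ṽ(ψ)), and assume I_vv(ψ) is invertible. Let ℓ(ψ) := h(ψ, ṽ(ψ)). Then for every ψ, the negative Hessian of ℓ equals the Schur complement: -∇²ℓ(ψ) = I_ψψ(ψ) - I_ψv(ψ) I_vv(ψ)⁻¹ I_vψ(ψ); equivalently, (-∇²ℓ(ψ))⁻¹ is the (ψ,ψ) block I^{ψψ} of the inverse of the full negative-Hessian matrix of h at (ψ, ṽ(ψ)) whenever that matrix is invertible. -/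

import Mathlib

open Matrix
/-- Theorem 3.2(ii): with `ṽ ψ` a stationary point of `h (ψ, ·)` for every `ψ`,
the negative Hessian of the profile `ℓ(ψ) = h(ψ, ṽ ψ)` equals the Schur
complement `I_ψψ - I_ψv I_vv⁻¹ I_vψ` of the negative-Hessian blocks of `h`
evaluated at `(ψ, ṽ ψ)`; equivalently, its inverse is the `(ψ,ψ)` block of the
inverse of the full negative-Hessian matrix of `h` whenever the latter is
invertible. -/
theorem hessian_profile_schur {p m : ℕ}
    (h : (Fin p → ℝ) → (Fin m → ℝ) → ℝ)
    (hsmooth : ContDiff ℝ 2 (fun q : (Fin p → ℝ) × (Fin m → ℝ) => h q.1 q.2))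
    (vtil : (Fin p → ℝ) → (Fin m → ℝ))
    (hvdiff : Differentiable ℝ vtil)
    (hstat : ∀ ψ : Fin p → ℝ, fderiv ℝ (fun v => h ψ v) (vtil ψ) = 0)
    (Iψψ : (Fin p → ℝ) → Matrix (Fin p) (Fin p) ℝ)
    (hIψψ : ∀ ψ i j, Iψψ ψ i j =
      -(fderiv ℝ (fun a => fderiv ℝ (fun b => h b (vtil ψ)) a (Pi.single j 1)) ψ (Pi.single i 1)))
    (Iψv : (Fin p → ℝ) → Matrix (Fin p) (Fin m) ℝ)
    (hIψv : ∀ ψ i j, Iψv ψ i j =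
      -(fderiv ℝ (fun v => fderiv ℝ (fun a => h a v) ψ (Pi.single i 1)) (vtil ψ) (Pi.single j 1)))
    (Ivψ : (Fin p → ℝ) → Matrix (Fin m) (Fin p) ℝ)
    (hIvψ : ∀ ψ, Ivψ ψ = (Iψv ψ)ᵀ)
    (Ivv : (Fin p → ℝ) → Matrix (Fin m) (Fin m) ℝ)
    (hIvv : ∀ ψ i j, Ivv ψ i j =
      -(fderiv ℝ (fun v => fderiv ℝ (fun w => h ψ w) v (Pi.single j 1)) (vtil ψ) (Pi.single i 1)))
    (hinv : ∀ ψ, IsUnit (Ivv ψ).det)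
    (ℓ : (Fin p → ℝ) → ℝ)
    (hℓ : ∀ ψ, ℓ ψ = h ψ (vtil ψ)) :
    ∀ ψ : Fin p → ℝ,
      (Matrix.of fun i j : Fin p =>
          -(fderiv ℝ (fun a => fderiv ℝ ℓ a (Pi.single j 1)) ψ (Pi.single i 1)))
        = Iψψ ψ - Iψv ψ * (Ivv ψ)⁻¹ * Ivψ ψ ∧
      (IsUnit (Matrix.fromBlocks (Iψψ ψ) (Iψv ψ) (Ivψ ψ) (Ivv ψ)).det →
        (Matrix.of fun i j : Fin p =>
            -(fderiv ℝ (fun a => fderiv ℝ ℓ a (Pi.single j 1)) ψ (Pi.single i 1)))⁻¹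
          = ((Matrix.fromBlocks (Iψψ ψ) (Iψv ψ) (Ivψ ψ) (Ivv ψ))⁻¹).toBlocks₁₁) := by
  set H : (Fin p → ℝ) × (Fin m → ℝ) → ℝ := fun q => h q.1 q.2 with hH
  have HD : Differentiable ℝ H := hsmooth.differentiable (by norm_num)
  have HD1 : ContDiff ℝ 1 (fderiv ℝ H) := hsmooth.fderiv_right (by norm_num)
  have HD1d : Differentiable ℝ (fderiv ℝ H) := HD1.differentiable one_ne_zero
  have symm : ∀ q v w, fderiv ℝ (fderiv ℝ H) q v w = fderiv ℝ (fderiv ℝ H) q w v :=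
    fun q => (hsmooth.contDiffAt.isSymmSndFDerivAt (by norm_num)).eq
  -- partial derivative identities
  have A : ∀ (ψ : Fin p → ℝ) (v : Fin m → ℝ),
      fderiv ℝ (fun a => h a v) ψ
        = (fderiv ℝ H (ψ, v)).comp (ContinuousLinearMap.inl ℝ (Fin p → ℝ) (Fin m → ℝ)) :=
    fun ψ v => ((HD (ψ, v)).hasFDerivAt.comp (f := fun e : Fin p → ℝ => (e, v)) ψ (hasFDerivAt_prodMk_left ψ v)).fderiv
  have B : ∀ (ψ : Fin p → ℝ) (v : Fin m → ℝ),
      fderiv ℝ (fun w => h ψ w) v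
        = (fderiv ℝ H (ψ, v)).comp (ContinuousLinearMap.inr ℝ (Fin p → ℝ) (Fin m → ℝ)) :=
    fun ψ v => ((HD (ψ, v)).hasFDerivAt.comp (f := fun w : Fin m → ℝ => (ψ, w)) v (hasFDerivAt_prodMk_right ψ v)).fderiv
  have stat' : ∀ (ψ : Fin p → ℝ) (u : Fin m → ℝ), fderiv ℝ H (ψ, vtil ψ) (0, u) = 0 := by
    intro ψ u
    have h1 := congrArg (fun L : (Fin m → ℝ) →L[ℝ] ℝ => L u) (hstat ψ)
    rw [B ψ (vtil ψ)] at h1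
    simpa using h1
  -- derivative of z a = (a, vtil a)
  have hz : ∀ a : Fin p → ℝ, HasFDerivAt (fun a : Fin p → ℝ => (a, vtil a))
      ((ContinuousLinearMap.id ℝ (Fin p → ℝ)).prod (fderiv ℝ vtil a)) a :=
    fun a => (hasFDerivAt_id a).prodMk (hvdiff a).hasFDerivAt
  have hℓfun : ℓ = fun a => H (a, vtil a) := funext fun a => hℓ a
  -- first derivative of ℓ
  have C : ∀ (a u : Fin p → ℝ), fderiv ℝ ℓ a u = fderiv ℝ H (a, vtil a) (u, 0) := by
    intro a u
    have h1 : HasFDerivAt ℓ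
        ((fderiv ℝ H (a, vtil a)).comp
          ((ContinuousLinearMap.id ℝ (Fin p → ℝ)).prod (fderiv ℝ vtil a))) a := by
      rw [hℓfun]; exact (HD (a, vtil a)).hasFDerivAt.comp (f := fun a : Fin p → ℝ => (a, vtil a)) a (hz a)
    rw [h1.fderiv]
    have h2 : ((u : Fin p → ℝ), fderiv ℝ vtil a u)
        = (u, (0 : Fin m → ℝ)) + (0, fderiv ℝ vtil a u) := by
      simp
    simp only [ContinuousLinearMap.comp_apply, ContinuousLinearMap.prod_apply,
      ContinuousLinearMap.id_apply]
    rw [h2, map_add, stat' a (fderiv ℝ vtil a u), add_zero]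
  -- second derivative of compositions
  have D2full : ∀ (a : Fin p → ℝ) (c : (Fin p → ℝ) × (Fin m → ℝ)) (u : Fin p → ℝ),
      fderiv ℝ (fun b => fderiv ℝ H (b, vtil b) c) a u
        = fderiv ℝ (fderiv ℝ H) (a, vtil a) (u, fderiv ℝ vtil a u) c := by
    intro a c u
    have h1 : HasFDerivAt (fun b : Fin p → ℝ => fderiv ℝ H (b, vtil b))
        ((fderiv ℝ (fderiv ℝ H) (a, vtil a)).comp
          ((ContinuousLinearMap.id ℝ (Fin p → ℝ)).prod (fderiv ℝ vtil a))) a :=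
      (HD1d (a, vtil a)).hasFDerivAt.comp (f := fun a : Fin p → ℝ => (a, vtil a)) a (hz a)
    have h2 := (h1.clm_apply (hasFDerivAt_const c a)).fderiv
    rw [h2]
    simp
  have D2left : ∀ (ψ : Fin p → ℝ) (v₀ : Fin m → ℝ) (c : (Fin p → ℝ) × (Fin m → ℝ))
      (u : Fin p → ℝ),
      fderiv ℝ (fun a => fderiv ℝ H (a, v₀) c) ψ u
        = fderiv ℝ (fderiv ℝ H) (ψ, v₀) (u, 0) c := by
    intro ψ v₀ c u
    have h1 : HasFDerivAt (fun a : Fin p → ℝ => fderiv ℝ H (a, v₀))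
        ((fderiv ℝ (fderiv ℝ H) (ψ, v₀)).comp
          (ContinuousLinearMap.inl ℝ (Fin p → ℝ) (Fin m → ℝ))) ψ :=
      (HD1d (ψ, v₀)).hasFDerivAt.comp (f := fun e : Fin p → ℝ => (e, v₀)) ψ (hasFDerivAt_prodMk_left ψ v₀)
    have h2 := (h1.clm_apply (hasFDerivAt_const c ψ)).fderiv
    rw [h2]
    simp
  have D2right : ∀ (ψ₀ : Fin p → ℝ) (v₀ : Fin m → ℝ) (c : (Fin p → ℝ) × (Fin m → ℝ))
      (u : Fin m → ℝ),
      fderiv ℝ (fun v => fderiv ℝ H (ψ₀, v) c) v₀ u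
        = fderiv ℝ (fderiv ℝ H) (ψ₀, v₀) (0, u) c := by
    intro ψ₀ v₀ c u
    have h1 : HasFDerivAt (fun v : Fin m → ℝ => fderiv ℝ H (ψ₀, v))
        ((fderiv ℝ (fderiv ℝ H) (ψ₀, v₀)).comp
          (ContinuousLinearMap.inr ℝ (Fin p → ℝ) (Fin m → ℝ))) v₀ :=
      (HD1d (ψ₀, v₀)).hasFDerivAt.comp (f := fun w : Fin m → ℝ => (ψ₀, w)) v₀ (hasFDerivAt_prodMk_right ψ₀ v₀)
    have h2 := (h1.clm_apply (hasFDerivAt_const c v₀)).fderiv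
    rw [h2]
    simp
  -- basis expansion in the second coordinate
  have exp2 : ∀ (L : ((Fin p → ℝ) × (Fin m → ℝ)) →L[ℝ] ℝ) (wv : Fin m → ℝ),
      L ((0 : Fin p → ℝ), wv) = ∑ k : Fin m, wv k * L ((0 : Fin p → ℝ), Pi.single k 1) := by
    intro L wv
    have hw1 : wv = ∑ k : Fin m, wv k • (Pi.single k 1 : Fin m → ℝ) := by
      funext j
      rw [Finset.sum_apply]
      simp [Pi.single_apply]
    have hw : ((0 : Fin p → ℝ), wv)
        = ∑ k : Fin m, wv k • (((0 : Fin p → ℝ), (Pi.single k 1 : Fin m → ℝ))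
            : (Fin p → ℝ) × (Fin m → ℝ)) := by
      refine Prod.ext ?_ ?_
      · simp [Prod.fst_sum]
      · rw [Prod.snd_sum]
        simpa using hw1
    rw [hw, map_sum]
    refine Finset.sum_congr rfl fun k _ => ?_
    rw [_root_.map_smul]
    rfl
  intro ψ
  -- abbreviations at the point ψ
  set B2 := fderiv ℝ (fderiv ℝ H) (ψ, vtil ψ) with hB2
  set Dv := fderiv ℝ vtil ψ with hDv
  set e : Fin p → (Fin p → ℝ) := fun i => Pi.single i 1 with he
  set f : Fin m → (Fin m → ℝ) := fun k => Pi.single k 1 with hf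
  set w : Fin p → (Fin m → ℝ) := fun i => Dv (e i) with hw
  -- block entries
  have eIψψ : ∀ i j, Iψψ ψ i j = -(B2 (e i, 0) (e j, 0)) := by
    intro i j
    rw [hIψψ]
    have hfun : (fun a => fderiv ℝ (fun b => h b (vtil ψ)) a (Pi.single j 1))
        = fun a => fderiv ℝ H (a, vtil ψ) ((e j : Fin p → ℝ), (0 : Fin m → ℝ)) := by
      funext a
      rw [A a (vtil ψ)]
      simp [he]
    rw [hfun, D2left ψ (vtil ψ) ((e j : Fin p → ℝ), (0 : Fin m → ℝ)) (e i)]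
  have eIψv : ∀ i j, Iψv ψ i j = -(B2 ((0 : Fin p → ℝ), f j) (e i, 0)) := by
    intro i j
    rw [hIψv]
    have hfun : (fun v => fderiv ℝ (fun a => h a v) ψ (Pi.single i 1))
        = fun v => fderiv ℝ H (ψ, v) ((e i : Fin p → ℝ), (0 : Fin m → ℝ)) := by
      funext v
      rw [A ψ v]
      simp [he]
    rw [hfun, D2right ψ (vtil ψ) ((e i : Fin p → ℝ), (0 : Fin m → ℝ)) (f j)]
  have eIvv : ∀ i j, Ivv ψ i j = -(B2 ((0 : Fin p → ℝ), f i) ((0 : Fin p → ℝ), f j)) := by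
    intro i j
    rw [hIvv]
    have hfun : (fun v => fderiv ℝ (fun w => h ψ w) v (Pi.single j 1))
        = fun v => fderiv ℝ H (ψ, v) ((0 : Fin p → ℝ), f j) := by
      funext v
      rw [B ψ v]
      simp [hf]
    rw [hfun, D2right ψ (vtil ψ) ((0 : Fin p → ℝ), f j) (f i)]
  -- Hessian entries of ℓ
  have eHess : ∀ i j,
      fderiv ℝ (fun a => fderiv ℝ ℓ a (Pi.single j 1)) ψ (Pi.single i 1)
        = B2 (e i, w i) (e j, 0) := by
    intro i j
    have hfun : (fun a => fderiv ℝ ℓ a (Pi.single j 1))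
        = fun a => fderiv ℝ H (a, vtil a) ((e j : Fin p → ℝ), (0 : Fin m → ℝ)) := by
      funext a
      exact C a (Pi.single j 1)
    rw [hfun, D2full ψ ((e j : Fin p → ℝ), (0 : Fin m → ℝ)) (e i)]
  -- second-order stationarity
  have statB2 : ∀ (i : Fin p) (u : Fin m → ℝ), B2 (e i, w i) ((0 : Fin p → ℝ), u) = 0 := by
    intro i u
    have hfun : (fun a => fderiv ℝ H (a, vtil a) ((0 : Fin p → ℝ), u))
        = fun _ : Fin p → ℝ => (0 : ℝ) := by
      funext a
      exact stat' a u
    have h1 := D2full ψ ((0 : Fin p → ℝ), u) (e i)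
    rw [hfun] at h1
    simpa using h1.symm
  -- key linear relation for w
  have keyw : ∀ (i : Fin p) (l : Fin m),
      ∑ k : Fin m, w i k * Ivv ψ k l = -(Iψv ψ i l) := by
    intro i l
    have h1 := statB2 i (f l)
    have hsplit : ((e i : Fin p → ℝ), w i)
        = ((e i : Fin p → ℝ), (0 : Fin m → ℝ)) + ((0 : Fin p → ℝ), w i) := by simp
    rw [hsplit, map_add, ContinuousLinearMap.add_apply] at h1
    have h2 : B2 ((0 : Fin p → ℝ), w i) ((0 : Fin p → ℝ), f l)
        = ∑ k : Fin m, w i k * B2 ((0 : Fin p → ℝ), f k) ((0 : Fin p → ℝ), f l) := by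
      have := exp2 (B2 ((0 : Fin p → ℝ), f l)) (w i)
      calc B2 ((0 : Fin p → ℝ), w i) ((0 : Fin p → ℝ), f l)
          = B2 ((0 : Fin p → ℝ), f l) ((0 : Fin p → ℝ), w i) := symm _ _ _
        _ = ∑ k : Fin m, w i k * B2 ((0 : Fin p → ℝ), f l) ((0 : Fin p → ℝ), f k) := this
        _ = ∑ k : Fin m, w i k * B2 ((0 : Fin p → ℝ), f k) ((0 : Fin p → ℝ), f l) := by
            refine Finset.sum_congr rfl fun k _ => ?_
            rw [symm _ _ _]
    have h3 : B2 ((e i : Fin p → ℝ), (0 : Fin m → ℝ)) ((0 : Fin p → ℝ), f l)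
        = -(Iψv ψ i l) := by
      rw [eIψv i l, symm _ _ _]; ring
    rw [h2, h3] at h1
    have h4 : ∑ k : Fin m, w i k * B2 ((0 : Fin p → ℝ), f k) ((0 : Fin p → ℝ), f l)
        = -∑ k : Fin m, w i k * Ivv ψ k l := by
      rw [← Finset.sum_neg_distrib]
      refine Finset.sum_congr rfl fun k _ => ?_
      rw [eIvv k l]; ring
    rw [h4] at h1
    linarith
  -- matrix form of the key relation
  set W : Matrix (Fin m) (Fin p) ℝ := Matrix.of fun k i => w i k with hWdef
  have hIvvsym : (Ivv ψ)ᵀ = Ivv ψ := by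
    ext i j
    rw [transpose_apply, eIvv i j, eIvv j i, symm _ _ _]
  have hmulW : Ivv ψ * W = -(Ivψ ψ) := by
    ext l i
    rw [Matrix.mul_apply]
    have hstep : ∑ k : Fin m, Ivv ψ l k * W k i = ∑ k : Fin m, w i k * Ivv ψ k l := by
      refine Finset.sum_congr rfl fun k _ => ?_
      have hsym' : Ivv ψ l k = Ivv ψ k l := by
        rw [eIvv l k, eIvv k l, symm _ _ _]
      rw [hsym', hWdef]; simp [mul_comm]
    rw [hstep, keyw i l, hIvψ]
    simp
  have hWval : W = -((Ivv ψ)⁻¹ * Ivψ ψ) := by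
    have h1 : (Ivv ψ)⁻¹ * (Ivv ψ * W) = W := by
      rw [← Matrix.mul_assoc, Matrix.nonsing_inv_mul _ (hinv ψ), Matrix.one_mul]
    rw [← h1, hmulW, Matrix.mul_neg]
  -- symmetry of the Schur correction term
  have hSsym : (Iψv ψ * (Ivv ψ)⁻¹ * Ivψ ψ)ᵀ = Iψv ψ * (Ivv ψ)⁻¹ * Ivψ ψ := by
    rw [Matrix.transpose_mul, Matrix.transpose_mul, Matrix.transpose_nonsing_inv, hIvvsym,
      hIvψ, Matrix.transpose_transpose, ← hIvψ, Matrix.mul_assoc]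
  -- main entrywise identity
  have main : (Matrix.of fun i j : Fin p =>
      -(fderiv ℝ (fun a => fderiv ℝ ℓ a (Pi.single j 1)) ψ (Pi.single i 1)))
        = Iψψ ψ - Iψv ψ * (Ivv ψ)⁻¹ * Ivψ ψ := by
    ext i j
    rw [Matrix.of_apply, eHess i j]
    have hsplit : ((e i : Fin p → ℝ), w i)
        = ((e i : Fin p → ℝ), (0 : Fin m → ℝ)) + ((0 : Fin p → ℝ), w i) := by simp
    rw [hsplit, map_add, ContinuousLinearMap.add_apply]
    have h2 : B2 ((0 : Fin p → ℝ), w i) ((e j : Fin p → ℝ), (0 : Fin m → ℝ))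
        = ∑ k : Fin m, w i k * B2 ((0 : Fin p → ℝ), f k) ((e j : Fin p → ℝ), (0 : Fin m → ℝ)) := by
      calc B2 ((0 : Fin p → ℝ), w i) ((e j : Fin p → ℝ), (0 : Fin m → ℝ))
          = B2 ((e j : Fin p → ℝ), (0 : Fin m → ℝ)) ((0 : Fin p → ℝ), w i) := symm _ _ _
        _ = ∑ k : Fin m, w i k *
              B2 ((e j : Fin p → ℝ), (0 : Fin m → ℝ)) ((0 : Fin p → ℝ), f k) :=
            exp2 (B2 ((e j : Fin p → ℝ), (0 : Fin m → ℝ))) (w i)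
        _ = ∑ k : Fin m, w i k *
              B2 ((0 : Fin p → ℝ), f k) ((e j : Fin p → ℝ), (0 : Fin m → ℝ)) := by
            refine Finset.sum_congr rfl fun k _ => ?_
            rw [symm _ _ _]
    have h3 : ∑ k : Fin m, w i k * B2 ((0 : Fin p → ℝ), f k) ((e j : Fin p → ℝ), (0 : Fin m → ℝ))
        = -∑ k : Fin m, w i k * Iψv ψ j k := by
      rw [← Finset.sum_neg_distrib]
      refine Finset.sum_congr rfl fun k _ => ?_
      rw [eIψv j k]; ring
    have h4 : ∑ k : Fin m, w i k * Iψv ψ j k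
        = -((Iψv ψ * (Ivv ψ)⁻¹ * Ivψ ψ) j i) := by
      have hstep : ∑ k : Fin m, w i k * Iψv ψ j k = (Iψv ψ * W) j i := by
        rw [Matrix.mul_apply]
        refine Finset.sum_congr rfl fun k _ => ?_
        rw [hWdef]; simp [mul_comm]
      rw [hstep, hWval, Matrix.mul_neg, ← Matrix.mul_assoc]
      simp
    have h5 : (Iψv ψ * (Ivv ψ)⁻¹ * Ivψ ψ) j i = (Iψv ψ * (Ivv ψ)⁻¹ * Ivψ ψ) i j := by
      conv_lhs => rw [← hSsym]
      exact Matrix.transpose_apply _ _ _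
    rw [h2, h3, h4, h5, Matrix.sub_apply]
    have h6 := eIψψ i j
    linarith
  refine ⟨main, ?_⟩
  intro hu
  haveI iD : Invertible (Ivv ψ) := (Ivv ψ).invertibleOfIsUnitDet (hinv ψ)
  haveI iM : Invertible (Matrix.fromBlocks (Iψψ ψ) (Iψv ψ) (Ivψ ψ) (Ivv ψ)) :=
    Matrix.invertibleOfIsUnitDet _ hu
  haveI iS : Invertible (Iψψ ψ - Iψv ψ * ⅟(Ivv ψ) * Ivψ ψ) :=
    Matrix.invertibleOfFromBlocks₂₂Invertible (Iψψ ψ) (Iψv ψ) (Ivψ ψ) (Ivv ψ)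
  have hS' : Iψψ ψ - Iψv ψ * ⅟(Ivv ψ) * Ivψ ψ = Iψψ ψ - Iψv ψ * (Ivv ψ)⁻¹ * Ivψ ψ := by
    rw [Matrix.invOf_eq_nonsing_inv]
  rw [main, ← hS', ← Matrix.invOf_eq_nonsing_inv,
    ← Matrix.invOf_eq_nonsing_inv (Matrix.fromBlocks (Iψψ ψ) (Iψv ψ) (Ivψ ψ) (Ivv ψ)),
    Matrix.invOf_fromBlocks₂₂_eq, Matrix.toBlocks_fromBlocks₁₁]
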